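/- For n = 4 agents and the additive valuation with item values (3, 3, 2, 2, 2, 2, 2, 2, 1, 1), the MMS equals 5 while for every 1 ≤ q ≤ 4 the nested share NS_{4,q} equals 4. In particular NS_{4,4} ≤ (4/5)·MMS for this instance. -/

import Mathlib

/-- The maximin share for `n` agents of the additive valuation on `Fin m` with item
values `w` (items indexed in non-increasing value order). -/
noncomputable def MMSn (n m : ℕ) (w : Fin m → ℝ) : ℝ :=
  sSup {x : ℝ | ∃ P : Fin n → Finset (Fin m),
    (∀ i j, i ≠ j → Disjoint (P i) (P j)) ∧
    Finset.univ.biUnion P = Finset.univ ∧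
    ∀ j, x ≤ ∑ i ∈ P j, w i}

/-- The nested share `NS_{n,q}` of the additive valuation on `Fin m` with item values
`w` sorted in non-increasing order: the best min-bundle value over partitions obtained
by choosing `k` with `n - q < k ≤ m`, a consecutive partition of the prefix
`{e_1,…,e_k}` given by monotone cutpoints `z` (with `z 0 = 0`, `z n = k`, and the first
`n - q` blocks singletons, i.e. `z j = j` for `j ≤ n - q`), and a consecutive partition
of the suffix given by monotone cutpoints `t` (with `t 0 = k`, `t n = m`) assigned to
the bundles in reverse order; bundle `j` (0-based) consists of the prefix block
`[z j, z (j+1))` together with the suffix block `[t (n-1-j), t (n-j))`. -/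
noncomputable def NS (n q m : ℕ) (w : Fin m → ℝ) : ℝ :=
  sSup {x : ℝ | ∃ (k : ℕ) (z t : ℕ → ℕ),
    n - q < k ∧ k ≤ m ∧
    Monotone z ∧ z 0 = 0 ∧ z n = k ∧ (∀ j, j ≤ n - q → z j = j) ∧
    Monotone t ∧ t 0 = k ∧ t n = m ∧
    ∀ j : Fin n, x ≤ ∑ i ∈ Finset.univ.filter (fun i : Fin m =>
      (z j.val ≤ i.val ∧ i.val < z (j.val + 1)) ∨
      (t (n - 1 - j.val) ≤ i.val ∧ i.val < t (n - j.val))), w i}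




def wN : ℕ → ℕ := fun n => if n < 2 then 3 else if n < 8 then 2 else if n < 10 then 1 else 0

def PS : ℕ → ℕ := fun n =>
  if n = 0 then 0 else if n = 1 then 3 else if n = 2 then 6 else if n = 3 then 8 else
  if n = 4 then 10 else if n = 5 then 12 else if n = 6 then 14 else if n = 7 then 16 else
  if n = 8 then 18 else if n = 9 then 19 else 20

set_option synthInstance.maxSize 4096 in
set_option maxHeartbeats 4000000 in
theorem key : ∀ f ≤ 10, ∀ e ≤ f, ∀ d ≤ e, ∀ k ≤ d, ∀ c ≤ k, ∀ b ≤ c, ∀ a ≤ b,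
    (PS a - PS 0) + (PS 10 - PS f) ≤ 4 ∨
    (PS b - PS a) + (PS f - PS e) ≤ 4 ∨
    (PS c - PS b) + (PS e - PS d) ≤ 4 ∨
    (PS k - PS c) + (PS d - PS k) ≤ 4 := by decide

set_option synthInstance.maxSize 4096 in
set_option maxHeartbeats 4000000 in
theorem natIS : ∀ d ≤ 10, ∀ c ≤ d, ∀ b ≤ c, ∀ a ≤ b,
    (∑ i ∈ Finset.range 10, if (a ≤ i ∧ i < b) ∨ (c ≤ i ∧ i < d) then wN i else 0)
      = (PS b - PS a) + (PS d - PS c) := by decide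

lemma wcast (i : Fin 10) :
    (![3, 3, 2, 2, 2, 2, 2, 2, 1, 1] : Fin 10 → ℝ) i = (wN i.val : ℝ) := by
  fin_cases i <;> norm_num [wN]

lemma bsum (a b c d : ℕ) (hab : a ≤ b) (hbc : b ≤ c) (hcd : c ≤ d) (hd : d ≤ 10) :
    (∑ i ∈ Finset.univ.filter (fun i : Fin 10 =>
        (a ≤ i.val ∧ i.val < b) ∨ (c ≤ i.val ∧ i.val < d)),
      (![3, 3, 2, 2, 2, 2, 2, 2, 1, 1] : Fin 10 → ℝ) i)
      = (((PS b - PS a) + (PS d - PS c) : ℕ) : ℝ) := by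
  rw [Finset.sum_filter]
  rw [show (∑ i : Fin 10, if (a ≤ i.val ∧ i.val < b) ∨ (c ≤ i.val ∧ i.val < d) then
        (![3,3,2,2,2,2,2,2,1,1] : Fin 10 → ℝ) i else 0)
      = ∑ i : Fin 10, (((fun m => if (a ≤ m ∧ m < b) ∨ (c ≤ m ∧ m < d) then wN m else 0) i.val : ℕ) : ℝ) from
    Finset.sum_congr rfl (fun i _ => by
      by_cases h : (a ≤ i.val ∧ i.val < b) ∨ (c ≤ i.val ∧ i.val < d) <;>
        simp [h, wcast i])]
  rw [Fin.sum_univ_eq_sum_range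
    (fun m => (((if (a ≤ m ∧ m < b) ∨ (c ≤ m ∧ m < d) then wN m else 0 : ℕ)) : ℝ)) 10]
  rw [← Nat.cast_sum]
  exact_mod_cast natIS d hd c hcd b hbc a hab

-- the item weights sum to 20
lemma wtot : ∑ i : Fin 10, (![3, 3, 2, 2, 2, 2, 2, 2, 1, 1] : Fin 10 → ℝ) i = 20 := by
  simp [Fin.sum_univ_succ]
  norm_num


lemma mms_ub (x : ℝ)
    (hx : x ∈ {x : ℝ | ∃ P : Fin 4 → Finset (Fin 10),
      (∀ i j, i ≠ j → Disjoint (P i) (P j)) ∧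
      Finset.univ.biUnion P = Finset.univ ∧
      ∀ j, x ≤ ∑ i ∈ P j, (![3,3,2,2,2,2,2,2,1,1] : Fin 10 → ℝ) i}) : x ≤ 5 := by
  obtain ⟨P, hdis, hcov, hmin⟩ := hx
  have hpd : ((Finset.univ : Finset (Fin 4)) : Set (Fin 4)).PairwiseDisjoint P :=
    fun i _ j _ hij => hdis i j hij
  have htot : ∑ j : Fin 4, ∑ i ∈ P j, (![3,3,2,2,2,2,2,2,1,1] : Fin 10 → ℝ) i = 20 := by
    rw [← Finset.sum_biUnion hpd, hcov, wtot]
  have h4 : 4 * x ≤ 20 := by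
    have := Finset.sum_le_sum (fun j (_ : j ∈ (Finset.univ : Finset (Fin 4))) => hmin j)
    simp only [Finset.sum_const, Finset.card_univ, Fintype.card_fin, nsmul_eq_mul] at this
    rw [htot] at this
    exact_mod_cast this
  linarith

lemma mms_mem : (5 : ℝ) ∈ {x : ℝ | ∃ P : Fin 4 → Finset (Fin 10),
      (∀ i j, i ≠ j → Disjoint (P i) (P j)) ∧
      Finset.univ.biUnion P = Finset.univ ∧
      ∀ j, x ≤ ∑ i ∈ P j, (![3,3,2,2,2,2,2,2,1,1] : Fin 10 → ℝ) i} := by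
  refine ⟨![{0,2},{1,3},{4,5,8},{6,7,9}], by decide, by decide, ?_⟩
  have hnat : ∀ s : Finset (Fin 10),
      ∑ i ∈ s, (![3,3,2,2,2,2,2,2,1,1] : Fin 10 → ℝ) i = ((∑ i ∈ s, wN i.val : ℕ) : ℝ) := by
    intro s
    rw [Nat.cast_sum]
    exact Finset.sum_congr rfl fun i _ => wcast i
  intro j
  fin_cases j
  all_goals rw [hnat]; norm_cast

lemma ns_mem_le (q : ℕ) (x : ℝ)
    (hx : x ∈ {x : ℝ | ∃ (k : ℕ) (z t : ℕ → ℕ),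
      4 - q < k ∧ k ≤ 10 ∧
      Monotone z ∧ z 0 = 0 ∧ z 4 = k ∧ (∀ j, j ≤ 4 - q → z j = j) ∧
      Monotone t ∧ t 0 = k ∧ t 4 = 10 ∧
      ∀ j : Fin 4, x ≤ ∑ i ∈ Finset.univ.filter (fun i : Fin 10 =>
        (z j.val ≤ i.val ∧ i.val < z (j.val + 1)) ∨
        (t (4 - 1 - j.val) ≤ i.val ∧ i.val < t (4 - j.val))),
        (![3,3,2,2,2,2,2,2,1,1] : Fin 10 → ℝ) i}) :
    x ≤ 4 := by
  obtain ⟨k, z, t, hk1, hk2, hmz, hz0, hz4, hzq, hmt, ht0, ht4, hb⟩ := hx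
  have hz01 : z 0 ≤ z 1 := hmz (by norm_num)
  have h1 : z 1 ≤ z 2 := hmz (by norm_num)
  have h2 : z 2 ≤ z 3 := hmz (by norm_num)
  have h3 : z 3 ≤ z 4 := hmz (by norm_num)
  have h4 : t 0 ≤ t 1 := hmt (by norm_num)
  have h5 : t 1 ≤ t 2 := hmt (by norm_num)
  have h6 : t 2 ≤ t 3 := hmt (by norm_num)
  have h7 : t 3 ≤ t 4 := hmt (by norm_num)
  have hkt : z 4 = t 0 := by rw [hz4, ht0]
  have h7' : t 3 ≤ 10 := ht4 ▸ h7
  have h6' : t 2 ≤ t 3 := h6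
  have hck : z 3 ≤ k := hz4 ▸ h3
  have hkd : k ≤ t 1 := ht0 ▸ h4
  -- the four bundle sums
  have e0 := hb ⟨0, by norm_num⟩
  have e1 := hb ⟨1, by norm_num⟩
  have e2 := hb ⟨2, by norm_num⟩
  have e3 := hb ⟨3, by norm_num⟩
  simp only [Fin.val_mk] at e0 e1 e2 e3
  norm_num at e0 e1 e2 e3
  rw [bsum (z 0) (z 1) (t 3) (t 4) hz01 (by omega) h7 (le_of_eq ht4)] at e0
  rw [bsum (z 1) (z 2) (t 2) (t 3) h1 (by omega) h6 h7'] at e1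
  rw [bsum (z 2) (z 3) (t 1) (t 2) h2 (by omega) h5 (by omega)] at e2
  rw [bsum (z 3) (z 4) (t 0) (t 1) h3 (le_of_eq hkt) h4 (by omega)] at e3
  rw [hz0] at e0; rw [ht4] at e0
  rw [hz4] at e3; rw [ht0] at e3
  rcases key (t 3) h7' (t 2) h6 (t 1) h5 k hkd (z 3) hck (z 2) h2 (z 1) h1 with h | h | h | h
  · exact e0.trans (by exact_mod_cast Nat.cast_le.mpr h)
  · exact e1.trans (by exact_mod_cast Nat.cast_le.mpr h)
  · exact e2.trans (by exact_mod_cast Nat.cast_le.mpr h)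
  · exact e3.trans (by exact_mod_cast Nat.cast_le.mpr h)

lemma sum_wcast (s : Finset (Fin 10)) :
    ∑ i ∈ s, (![3,3,2,2,2,2,2,2,1,1] : Fin 10 → ℝ) i = ((∑ i ∈ s, wN i.val : ℕ) : ℝ) := by
  rw [Nat.cast_sum]
  exact Finset.sum_congr rfl fun i _ => wcast i

lemma ns_mem_four (q : ℕ) (hq1 : 1 ≤ q) (hq2 : q ≤ 4) :
    (4 : ℝ) ∈ {x : ℝ | ∃ (k : ℕ) (z t : ℕ → ℕ),
      4 - q < k ∧ k ≤ 10 ∧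
      Monotone z ∧ z 0 = 0 ∧ z 4 = k ∧ (∀ j, j ≤ 4 - q → z j = j) ∧
      Monotone t ∧ t 0 = k ∧ t 4 = 10 ∧
      ∀ j : Fin 4, x ≤ ∑ i ∈ Finset.univ.filter (fun i : Fin 10 =>
        (z j.val ≤ i.val ∧ i.val < z (j.val + 1)) ∨
        (t (4 - 1 - j.val) ≤ i.val ∧ i.val < t (4 - j.val))),
        (![3,3,2,2,2,2,2,2,1,1] : Fin 10 → ℝ) i} := by
  refine ⟨4, fun j => min j 4, fun j => if j ≤ 3 then j + 4 else 10,
    by omega, by norm_num,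
    fun i j hij => min_le_min hij le_rfl, by norm_num, by norm_num,
    fun j hj => by dsimp only; omega, ?_, by norm_num, by norm_num, ?_⟩
  · apply monotone_nat_of_le_succ
    intro n
    split_ifs <;> omega
  · intro j
    fin_cases j
    all_goals rw [sum_wcast]; norm_cast


/-- For `n = 4` agents and the additive valuation with item values
`(3, 3, 2, 2, 2, 2, 2, 2, 1, 1)`, the maximin share equals `5` while the nested share
`NS_{4,q}` equals `4` for every `1 ≤ q ≤ 4`; in particular `NS_{4,4} ≤ (4/5)·MMS`. -/
theorem ns_example_four_agents :
    MMSn 4 10 (![3, 3, 2, 2, 2, 2, 2, 2, 1, 1] : Fin 10 → ℝ) = 5 ∧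
    (∀ q : ℕ, 1 ≤ q → q ≤ 4 →
      NS 4 q 10 (![3, 3, 2, 2, 2, 2, 2, 2, 1, 1] : Fin 10 → ℝ) = 4) ∧
    NS 4 4 10 (![3, 3, 2, 2, 2, 2, 2, 2, 1, 1] : Fin 10 → ℝ)
      ≤ (4 / 5 : ℝ) * MMSn 4 10 (![3, 3, 2, 2, 2, 2, 2, 2, 1, 1] : Fin 10 → ℝ) := by
  have hub : ∀ x ∈ {x : ℝ | ∃ P : Fin 4 → Finset (Fin 10),
      (∀ i j, i ≠ j → Disjoint (P i) (P j)) ∧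
      Finset.univ.biUnion P = Finset.univ ∧
      ∀ j, x ≤ ∑ i ∈ P j, (![3,3,2,2,2,2,2,2,1,1] : Fin 10 → ℝ) i}, x ≤ 5 :=
    fun x hx => mms_ub x hx
  have hMMS : MMSn 4 10 (![3, 3, 2, 2, 2, 2, 2, 2, 1, 1] : Fin 10 → ℝ) = 5 := by
    unfold MMSn
    exact le_antisymm (csSup_le ⟨5, mms_mem⟩ hub) (le_csSup ⟨5, hub⟩ mms_mem)
  have hNS : ∀ q : ℕ, 1 ≤ q → q ≤ 4 →
      NS 4 q 10 (![3, 3, 2, 2, 2, 2, 2, 2, 1, 1] : Fin 10 → ℝ) = 4 := by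
    intro q h1 h2
    unfold NS
    exact le_antisymm
      (csSup_le ⟨4, ns_mem_four q h1 h2⟩ (fun x hx => ns_mem_le q x hx))
      (le_csSup ⟨4, fun x hx => ns_mem_le q x hx⟩ (ns_mem_four q h1 h2))
  refine ⟨hMMS, hNS, ?_⟩
  rw [hMMS, hNS 4 (by norm_num) le_rfl]
  norm_num
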